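/- Let R be a commutative ring, E a finitely generated projective R-module of rank r, s ∈ E Koszul-regular, and Y = Spec(R/I) with I the image of contraction with s. The dg algebra A[t⁻¹] = Λ•E* ⊗ R[t,t⁻¹] (with d(f) = t·ιₛ(f), E* in bidegree (1,−1), t in bidegree (2,−1)) contains, in each fixed internal degree −k, a complex isomorphic to the Koszul complex of s shifted by 2k; consequently the projection A[t⁻¹] → (R/I)[t,t⁻¹] sending tᵏ·R to tᵏ·(R/I) and all positive exterior powers to 0 is a map of dg algebras and a quasi-isomorphism. -/

import Mathlib

open Module TensorProduct

/-- Contraction `ιₛ` against `s : E` on the exterior algebra `Λ•E*`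
(the Koszul differential). -/
noncomputable def koszulContraction (R : Type) [CommRing R]
    (E : Type) [AddCommGroup E] [Module R E] (s : E) :
    ExteriorAlgebra R (Dual R E) →ₗ[R] ExteriorAlgebra R (Dual R E) :=
  CliffordAlgebra.contractLeft (Q := (0 : QuadraticForm R (Dual R E))) (Dual.eval R E s)

/-- The differential `dL(f ⊗ p) = ιₛ(f) ⊗ t·p` of the localized dg algebra
`A[t⁻¹] = Λ•E* ⊗_R R[t,t⁻¹]` (`E*` in bidegree `(1,-1)`, `t` in bidegree `(2,-1)`). -/
noncomputable def localizedKoszulDualDiff (R : Type) [CommRing R]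
    (E : Type) [AddCommGroup E] [Module R E] (s : E) :
    TensorProduct R (ExteriorAlgebra R (Dual R E)) (LaurentPolynomial R) →ₗ[R]
      TensorProduct R (ExteriorAlgebra R (Dual R E)) (LaurentPolynomial R) :=
  TensorProduct.map (koszulContraction R E s) (LinearMap.mulLeft R (LaurentPolynomial.T 1))

/-- The projection `A[t⁻¹] = Λ•E* ⊗ R[t,t⁻¹] → (R/I)[t,t⁻¹]` sending `tᵏ·R` to
`tᵏ·(R/I)` and all positive exterior powers to `0`, as a map of `R`-algebras. -/
noncomputable def koszulProjection (R : Type) [CommRing R]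
    (E : Type) [AddCommGroup E] [Module R E] (s : E) :
    TensorProduct R (ExteriorAlgebra R (Dual R E)) (LaurentPolynomial R) →ₐ[R]
      TensorProduct R (R ⧸ Ideal.span (Set.range fun f : Dual R E => f s))
        (LaurentPolynomial R) :=
  Algebra.TensorProduct.map
    ((Ideal.Quotient.mkₐ R (Ideal.span (Set.range fun f : Dual R E => f s))).comp
      (ExteriorAlgebra.algebraMapInv))
    (AlgHom.id R (LaurentPolynomial R))


set_option maxHeartbeats 1000000
set_option synthInstance.maxHeartbeats 400000

section KoszulAux

variable (R : Type) [CommRing R] (E : Type) [AddCommGroup E] [Module R E] (s : E)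

private lemma koszulContraction_def :
    koszulContraction R E s =
      CliffordAlgebra.contractLeft (Q := (0 : QuadraticForm R (Dual R E)))
        (Dual.eval R E s) := rfl

/-- The decomposition of `A ⊗ R[t,t⁻¹]` into components indexed by powers of `t`. -/
private noncomputable def koszulE :
    TensorProduct R (ExteriorAlgebra R (Dual R E)) (LaurentPolynomial R) ≃ₗ[R]
      (ℤ →₀ ExteriorAlgebra R (Dual R E)) :=
  LinearEquiv.lTensor _ (AddMonoidAlgebra.coeffLinearEquiv R) ≪≫ₗ
    TensorProduct.finsuppScalarRight R R (ExteriorAlgebra R (Dual R E)) ℤ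

/-- The decomposition of `(R/I) ⊗ R[t,t⁻¹]` into components indexed by powers of `t`. -/
private noncomputable def koszulQE :
    TensorProduct R (R ⧸ Ideal.span (Set.range fun f : Dual R E => f s))
        (LaurentPolynomial R) ≃ₗ[R]
      (ℤ →₀ (R ⧸ Ideal.span (Set.range fun f : Dual R E => f s))) :=
  LinearEquiv.lTensor _ (AddMonoidAlgebra.coeffLinearEquiv R) ≪≫ₗ
    TensorProduct.finsuppScalarRight R R _ ℤ

private lemma koszulE_tmul (f : ExteriorAlgebra R (Dual R E)) (p : LaurentPolynomial R)
    (m : ℤ) : koszulE R E (f ⊗ₜ p) m = p.coeff m • f :=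
  TensorProduct.finsuppScalarRight_apply_tmul_apply (S := R) f p.coeff m

private lemma koszulQE_tmul (c : R ⧸ Ideal.span (Set.range fun f : Dual R E => f s))
    (p : LaurentPolynomial R) (m : ℤ) :
    koszulQE R E s (c ⊗ₜ p) m = p.coeff m • c :=
  TensorProduct.finsuppScalarRight_apply_tmul_apply (S := R) c p.coeff m

private lemma koszul_dL_tmul (f : ExteriorAlgebra R (Dual R E)) (p : LaurentPolynomial R) :
    localizedKoszulDualDiff R E s (f ⊗ₜ p)
      = koszulContraction R E s f ⊗ₜ (LaurentPolynomial.T 1 * p) := by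
  simp only [localizedKoszulDualDiff, TensorProduct.map_tmul, LinearMap.mulLeft_apply]

private lemma koszul_proj_tmul (f : ExteriorAlgebra R (Dual R E)) (p : LaurentPolynomial R) :
    koszulProjection R E s (f ⊗ₜ p)
      = Ideal.Quotient.mkₐ R (Ideal.span (Set.range fun f : Dual R E => f s))
          (ExteriorAlgebra.algebraMapInv f) ⊗ₜ p := by
  simp only [koszulProjection, Algebra.TensorProduct.map_tmul, AlgHom.comp_apply,
    AlgHom.coe_id, id_eq]

private lemma koszul_T_coeff (p : LaurentPolynomial R) (n : ℤ) :
    (LaurentPolynomial.T 1 * p : LaurentPolynomial R).coeff n = p.coeff (n - 1) := by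
  have h : (LaurentPolynomial.T 1 * p : LaurentPolynomial R).coeff n = 1 * p.coeff (-1 + n) :=
    AddMonoidAlgebra.coeff_single_mul_apply (R := R) (G := ℤ) p 1 1 n
  rw [h]; simp [sub_eq_neg_add]

private lemma koszul_aux_mul :
    ∀ a b : ExteriorAlgebra R (Dual R E),
      ExteriorAlgebra.algebraMapInv (koszulContraction R E s b) ∈
        Ideal.span (Set.range fun f : Dual R E => f s) →
      ExteriorAlgebra.algebraMapInv (koszulContraction R E s (a * b)) ∈
        Ideal.span (Set.range fun f : Dual R E => f s) := by
  intro a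
  induction a using CliffordAlgebra.induction with
  | algebraMap r =>
      intro b hb
      rw [← Algebra.smul_def, map_smul, map_smul, smul_eq_mul]
      exact Ideal.mul_mem_left _ _ hb
  | ι f =>
      intro b hb
      rw [koszulContraction_def, CliffordAlgebra.contractLeft_ι_mul, map_sub, map_smul,
        map_mul]
      have hι : ExteriorAlgebra.algebraMapInv
          ((CliffordAlgebra.ι (0 : QuadraticForm R (Dual R E))) f) = 0 := by
        simp [ExteriorAlgebra.algebraMapInv]
      rw [hι, zero_mul, sub_zero, smul_eq_mul]
      exact Ideal.mul_mem_right _ _ (Ideal.subset_span ⟨f, rfl⟩)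
  | mul a₁ a₂ h₁ h₂ =>
      intro b hb
      rw [mul_assoc]
      exact h₁ _ (h₂ _ hb)
  | add a₁ a₂ h₁ h₂ =>
      intro b hb
      rw [add_mul, map_add, map_add]
      exact Ideal.add_mem _ (h₁ _ hb) (h₂ _ hb)

private lemma koszul_contraction_mem (a : ExteriorAlgebra R (Dual R E)) :
    ExteriorAlgebra.algebraMapInv (koszulContraction R E s a) ∈
      Ideal.span (Set.range fun f : Dual R E => f s) := by
  have h1 : koszulContraction R E s (1 : ExteriorAlgebra R (Dual R E)) = 0 := by
    rw [koszulContraction_def]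
    exact CliffordAlgebra.contractLeft_one _ _
  have h := koszul_aux_mul R E s a 1 (by rw [h1]; simp)
  rwa [mul_one] at h

private lemma koszul_exactness
    (hreg : LinearMap.ker (koszulContraction R E s) =
      LinearMap.range (koszulContraction R E s) ⊔
        Submodule.span R {(1 : ExteriorAlgebra R (Dual R E))})
    (a : ExteriorAlgebra R (Dual R E))
    (h1 : koszulContraction R E s a = 0)
    (h2 : ExteriorAlgebra.algebraMapInv a ∈
      Ideal.span (Set.range fun f : Dual R E => f s)) :
    ∃ b, koszulContraction R E s b = a := by
  have ha : a ∈ LinearMap.ker (koszulContraction R E s) := LinearMap.mem_ker.mpr h1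
  rw [hreg] at ha
  obtain ⟨u, hu, v, hv, rfl⟩ := Submodule.mem_sup.mp ha
  obtain ⟨b, rfl⟩ := hu
  obtain ⟨r, rfl⟩ := Submodule.mem_span_singleton.mp hv
  have hδb := koszul_contraction_mem R E s b
  have hr : r ∈ Ideal.span (Set.range fun f : Dual R E => f s) := by
    have h2' : ExteriorAlgebra.algebraMapInv (koszulContraction R E s b) + r ∈
        Ideal.span (Set.range fun f : Dual R E => f s) := by
      simpa using h2
    simpa using Ideal.sub_mem _ h2' hδb
  have key : ∀ c ∈ Ideal.span (Set.range fun f : Dual R E => f s),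
      ∃ w, koszulContraction R E s w = c • (1 : ExteriorAlgebra R (Dual R E)) := by
    intro c hc
    refine Submodule.span_induction ?_ ?_ ?_ ?_ hc
    · rintro x ⟨f, rfl⟩
      refine ⟨CliffordAlgebra.ι (0 : QuadraticForm R (Dual R E)) f, ?_⟩
      rw [koszulContraction_def, CliffordAlgebra.contractLeft_ι]
      exact Algebra.algebraMap_eq_smul_one _
    · exact ⟨0, by simp⟩
    · rintro x y _ _ ⟨w₁, hw₁⟩ ⟨w₂, hw₂⟩
      exact ⟨w₁ + w₂, by rw [map_add, hw₁, hw₂, add_smul]⟩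
    · rintro t x _ ⟨w, hw⟩
      exact ⟨t • w, by rw [map_smul, hw, smul_smul, smul_eq_mul]⟩
  obtain ⟨w, hw⟩ := key r hr
  exact ⟨b + w, by rw [map_add, hw]⟩

private lemma koszul_e_dL
    (x : TensorProduct R (ExteriorAlgebra R (Dual R E)) (LaurentPolynomial R)) (n : ℤ) :
    koszulE R E (localizedKoszulDualDiff R E s x) n
      = koszulContraction R E s (koszulE R E x (n - 1)) := by
  induction x using TensorProduct.induction_on with
  | zero => simp only [map_zero, Finsupp.coe_zero, Pi.zero_apply]
  | tmul f p =>
      rw [koszul_dL_tmul, koszulE_tmul, koszulE_tmul, koszul_T_coeff R p n, map_smul]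
  | add x y hx hy =>
      simp only [map_add, Finsupp.add_apply, hx, hy]

private lemma koszul_e_proj
    (x : TensorProduct R (ExteriorAlgebra R (Dual R E)) (LaurentPolynomial R)) (n : ℤ) :
    koszulQE R E s (koszulProjection R E s x) n
      = Ideal.Quotient.mkₐ R (Ideal.span (Set.range fun f : Dual R E => f s))
        (ExteriorAlgebra.algebraMapInv (koszulE R E x n)) := by
  induction x using TensorProduct.induction_on with
  | zero => simp only [map_zero, Finsupp.coe_zero, Pi.zero_apply]
  | tmul f p =>
      rw [koszul_proj_tmul, koszulQE_tmul, koszulE_tmul, map_smul, map_smul]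
  | add x y hx hy =>
      simp only [map_add, Finsupp.add_apply, hx, hy]

end KoszulAux

/-- Let `R` be a commutative ring, `E` a finitely generated projective
`R`-module of rank `r`, `s ∈ E` Koszul-regular (encoded, via the contraction operator
`δ = ιₛ` on `Λ•E*`, by `ker δ = range δ ⊔ R·1`: the Koszul complex of `s` is a resolution
of `R/I`), and `I` the image of contraction with `s`.  The projection
`A[t⁻¹] = Λ•E* ⊗ R[t,t⁻¹] → (R/I)[t,t⁻¹]` (an algebra homomorphism, so the kernel — the
positive exterior-degree part — is an ideal) is a map of dg algebras: it intertwines the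
differential `dL` of `A[t⁻¹]` with the zero differential of `(R/I)[t,t⁻¹]`; and it is a
quasi-isomorphism: it is surjective on cocycles (indeed surjective) and a cocycle maps to
`0` iff it is a coboundary. -/
theorem koszul_projection_dg_quasi_iso
    (R : Type) [CommRing R]
    (E : Type) [AddCommGroup E] [Module R E] [Module.Finite R E] [Module.Projective R E]
    (s : E)
    (hreg : LinearMap.ker (koszulContraction R E s) =
      LinearMap.range (koszulContraction R E s) ⊔
        Submodule.span R {(1 : ExteriorAlgebra R (Dual R E))}) :
    -- the projection intertwines the differentials (the target has zero differential):
    ((koszulProjection R E s).toLinearMap).comp (localizedKoszulDualDiff R E s) = 0 ∧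
    -- quasi-isomorphism onto the cohomology `(R/I)[t,t⁻¹]`:
    (∀ y, ∃ x, localizedKoszulDualDiff R E s x = 0 ∧ koszulProjection R E s x = y) ∧
    (∀ x, localizedKoszulDualDiff R E s x = 0 →
      (koszulProjection R E s x = 0 ↔ x ∈ LinearMap.range (localizedKoszulDualDiff R E s))) := by
  classical
  have hpid : ∀ z, koszulProjection R E s (localizedKoszulDualDiff R E s z) = 0 := by
    intro z
    apply (koszulQE R E s).injective
    refine Finsupp.ext fun n => ?_
    rw [koszul_e_proj R E s, koszul_e_dL R E s]
    simp only [map_zero, Finsupp.coe_zero, Pi.zero_apply, Ideal.Quotient.mkₐ_eq_mk]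
    exact Ideal.Quotient.eq_zero_iff_mem.mpr (koszul_contraction_mem R E s _)
  refine ⟨LinearMap.ext fun z => by
    rw [LinearMap.comp_apply, LinearMap.zero_apply, AlgHom.toLinearMap_apply]
    exact hpid z, ?_, ?_⟩
  · intro y
    induction y using TensorProduct.induction_on with
    | zero => exact ⟨0, map_zero _, map_zero _⟩
    | tmul r' p =>
        obtain ⟨r, rfl⟩ := Ideal.Quotient.mk_surjective r'
        refine ⟨(algebraMap R (ExteriorAlgebra R (Dual R E)) r) ⊗ₜ p, ?_, ?_⟩
        · rw [koszul_dL_tmul, koszulContraction_def,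
            CliffordAlgebra.contractLeft_algebraMap, TensorProduct.zero_tmul]
        · have hli : ExteriorAlgebra.algebraMapInv
              ((algebraMap R (ExteriorAlgebra R (Dual R E))) r) = r :=
            ExteriorAlgebra.algebraMap_leftInverse _ r
          rw [koszul_proj_tmul, hli, Ideal.Quotient.mkₐ_eq_mk]
    | add x y hx hy =>
        obtain ⟨x₁, h1, h2⟩ := hx
        obtain ⟨x₂, h3, h4⟩ := hy
        exact ⟨x₁ + x₂, by rw [map_add, h1, h3, add_zero], by rw [map_add, h2, h4]⟩
  · intro x hx
    constructor
    · intro h0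
      have hδ : ∀ n : ℤ, koszulContraction R E s (koszulE R E x n) = 0 := by
        intro n
        have h := koszul_e_dL R E s x (n + 1)
        rw [hx] at h
        simpa [add_sub_cancel_right] using h.symm
      have hm : ∀ n : ℤ, ExteriorAlgebra.algebraMapInv (koszulE R E x n) ∈
          Ideal.span (Set.range fun f : Dual R E => f s) := by
        intro n
        have h := koszul_e_proj R E s x n
        rw [h0] at h
        rw [← Ideal.Quotient.eq_zero_iff_mem]
        simpa [Ideal.Quotient.mkₐ_eq_mk] using h.symm
      choose b hb using fun n => koszul_exactness R E s hreg _ (hδ n) (hm n)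
      set ex := koszulE R E x with hex
      have hgd : ∀ n, koszulContraction R E s
          (if ex n = 0 then 0 else b n) = ex n := by
        intro n
        split
        · rw [map_zero]; exact (by assumption : ex n = 0).symm
        · exact hb n
      have hsupp : ∀ m : ℤ, (if ex (m + 1) = 0 then 0 else b (m + 1)) ≠ 0 →
          m ∈ ex.support.map ⟨fun n => n - 1, fun a b h => by dsimp only at h; omega⟩ := by
        intro m hm'
        have hne : ex (m + 1) ≠ 0 := by
          intro h; exact hm' (by rw [if_pos h])
        rw [Finset.mem_map]
        exact ⟨m + 1, Finsupp.mem_support_iff.mpr hne, add_sub_cancel_right m 1⟩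
      refine ⟨(koszulE R E).symm
        (Finsupp.onFinset _ (fun m => if ex (m + 1) = 0 then 0 else b (m + 1)) hsupp), ?_⟩
      apply (koszulE R E).injective
      refine Finsupp.ext fun n => ?_
      rw [koszul_e_dL R E s, LinearEquiv.apply_symm_apply, Finsupp.onFinset_apply,
        sub_add_cancel]
      exact hgd n
    · rintro ⟨y, rfl⟩
      exact hpid y
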